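/- Let D be the n×n matrix with D[i,j] = |i - j| and D^L its distance Laplacian. If x is any eigenvector of D^L corresponding to the largest eigenvalue λ_n, then the entries of x are monotone: either x_1 ≥ x_2 ≥ ... ≥ x_n or x_1 ≤ x_2 ≤ ... ≤ x_n. -/

import Mathlib

open Matrix Finset

/-- The (n)×(n+1) difference matrix: `S i i = -1`, `S i (i+1) = 1`, else `0`. -/
noncomputable def Smat (n : ℕ) : Matrix (Fin n) (Fin (n + 1)) ℝ :=
  Matrix.of fun i j => if (j : ℕ) = (i : ℕ) then -1 else if (j : ℕ) = (i : ℕ) + 1 then 1 else 0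

/-- The (n+1)×n cumulative-sum matrix: `T i j = 1` iff `j < i`. -/
noncomputable def Tmat (n : ℕ) : Matrix (Fin (n + 1)) (Fin n) ℝ :=
  Matrix.of fun i j => if (j : ℕ) < (i : ℕ) then 1 else 0

/-- The Laplacian associated with a symmetric matrix `A`:
off-diagonal entries `-A i j`, diagonal entry `∑_{k ≠ i} A i k`. -/
noncomputable def lap {m : Type*} [Fintype m] [DecidableEq m] (A : Matrix m m ℝ) :
    Matrix m m ℝ :=
  Matrix.of fun i j => if i = j then ∑ k ∈ Finset.univ.filter (fun k => k ≠ i), A i k else -A i j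

lemma lap_row_sum {m : Type*} [Fintype m] [DecidableEq m] (A : Matrix m m ℝ) (i : m) :
    ∑ j, lap A i j = 0 := by
  classical
  have hfil : Finset.univ.filter (fun k : m => k ≠ i) = Finset.univ.erase i := by
    ext k; simp [and_comm]
  have h1 : ∑ j, lap A i j = lap A i i + ∑ j ∈ Finset.univ.erase i, lap A i j :=
    (Finset.add_sum_erase _ _ (mem_univ i)).symm
  have h2 : ∑ j ∈ Finset.univ.erase i, lap A i j = ∑ j ∈ Finset.univ.erase i, -A i j := by
    apply Finset.sum_congr rfl
    intro j hj
    have hji : j ≠ i := (Finset.mem_erase.1 hj).1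
    simp [lap, (Ne.symm hji)]
  have h3 : lap A i i = ∑ j ∈ Finset.univ.erase i, A i j := by
    simp [lap, hfil]
  rw [h1, h2, h3, Finset.sum_neg_distrib]
  ring

lemma lap_mulVec_const {m : Type*} [Fintype m] [DecidableEq m] (A : Matrix m m ℝ) (c : ℝ) :
    (lap A).mulVec (fun _ => c) = 0 := by
  funext i
  have : (lap A).mulVec (fun _ => c) i = (∑ j, lap A i j) * c := by
    simp [mulVec, dotProduct, Finset.sum_mul]
  rw [this, lap_row_sum, zero_mul]
  rfl

lemma smat_apply {n : ℕ} (i : Fin n) (j : Fin (n + 1)) :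
    Smat n i j = (if j = i.succ then (1 : ℝ) else 0) - (if j = i.castSucc then 1 else 0) := by
  show (if (j : ℕ) = (i : ℕ) then (-1 : ℝ) else if (j : ℕ) = (i : ℕ) + 1 then 1 else 0) = _
  by_cases h1 : j = i.castSucc
  · subst h1
    rw [if_pos (by simp), if_neg (by simp [Fin.ext_iff]), if_pos rfl]
    norm_num
  · by_cases h2 : j = i.succ
    · subst h2
      rw [if_neg (by simp [Fin.ext_iff]), if_pos (by simp), if_pos rfl, if_neg h1]
      norm_num
    · rw [if_neg (fun hc => h1 (Fin.ext (by simp [hc]))),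
        if_neg (fun hc => h2 (Fin.ext (by simp [hc]))), if_neg h2, if_neg h1]
      norm_num

lemma smat_mulVec {n : ℕ} (v : Fin (n + 1) → ℝ) (i : Fin n) :
    (Smat n).mulVec v i = v i.succ - v i.castSucc := by
  show ∑ j, Smat n i j * v j = _
  simp only [smat_apply, sub_mul, ite_mul, one_mul, zero_mul]
  rw [Finset.sum_sub_distrib]
  simp [Finset.sum_ite_eq']

lemma tmat_mulVec {n : ℕ} (v : Fin n → ℝ) (i : Fin (n + 1)) :
    (Tmat n).mulVec v i = ∑ b ∈ Finset.univ.filter (fun b : Fin n => (b : ℕ) < (i : ℕ)), v b := by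
  show ∑ j, Tmat n i j * v j = _
  rw [Finset.sum_filter]
  apply Finset.sum_congr rfl
  intro j _
  show (if (j : ℕ) < (i : ℕ) then (1 : ℝ) else 0) * v j = _
  by_cases h : (j : ℕ) < (i : ℕ) <;> simp [h]

lemma filter_succ_insert {n : ℕ} (i : Fin n) :
    Finset.univ.filter (fun b : Fin n => (b : ℕ) < (i : ℕ) + 1)
      = insert i (Finset.univ.filter (fun b : Fin n => (b : ℕ) < (i : ℕ))) := by
  ext b
  simp only [mem_filter, mem_univ, true_and, mem_insert]
  constructor
  · intro h
    rcases Nat.lt_succ_iff_lt_or_eq.1 h with h | h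
    · exact Or.inr h
    · exact Or.inl (Fin.ext h)
  · rintro (rfl | h)
    · omega
    · omega

lemma tmat_succ_sub {n : ℕ} (v : Fin n → ℝ) (i : Fin n) :
    (Tmat n).mulVec v i.succ - (Tmat n).mulVec v i.castSucc = v i := by
  rw [tmat_mulVec, tmat_mulVec]
  have h1 : ((i.succ : Fin (n + 1)) : ℕ) = (i : ℕ) + 1 := rfl
  have h2 : ((i.castSucc : Fin (n + 1)) : ℕ) = (i : ℕ) := rfl
  rw [h1, h2, filter_succ_insert, Finset.sum_insert (by simp)]
  ring

lemma tmat_smat_mulVec {n : ℕ} (v : Fin (n + 1) → ℝ) (i : Fin (n + 1)) :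
    (Tmat n).mulVec ((Smat n).mulVec v) i = v i - v 0 := by
  rw [tmat_mulVec]
  have key : ∀ (m : ℕ) (hm : m < n + 1),
      ∑ b ∈ Finset.univ.filter (fun b : Fin n => (b : ℕ) < m), (Smat n).mulVec v b
        = v ⟨m, hm⟩ - v 0 := by
    intro m
    induction m with
    | zero =>
      intro hm
      rw [Finset.filter_false_of_mem (by intro b _; omega)]
      simp [Fin.ext_iff]
    | succ k ih =>
      intro hm
      have hkn : k < n := by omega
      have hk : k < n + 1 := by omega
      have : Finset.univ.filter (fun b : Fin n => (b : ℕ) < k + 1)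
          = insert (⟨k, hkn⟩ : Fin n) (Finset.univ.filter (fun b : Fin n => (b : ℕ) < k)) := by
        have := filter_succ_insert (⟨k, hkn⟩ : Fin n)
        simpa using this
      rw [this, Finset.sum_insert (by simp), ih hk, smat_mulVec]
      have e1 : (⟨k, hkn⟩ : Fin n).succ = (⟨k + 1, hm⟩ : Fin (n + 1)) := rfl
      have e2 : (⟨k, hkn⟩ : Fin n).castSucc = (⟨k, hk⟩ : Fin (n + 1)) := rfl
      rw [e1, e2]
      ring
  have := key (i : ℕ) i.isLt
  simpa using this

lemma abs_sum_lt {ι : Type*} [Fintype ι] (t : ι → ℝ) (p q : ι) (hp : t p < 0) (hq : 0 < t q) :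
    |∑ k, t k| < ∑ k, |t k| := by
  rcases le_or_gt 0 (∑ k, t k) with h | h
  · rw [abs_of_nonneg h]
    have h1 : |t p| - t p ≤ ∑ k, (|t k| - t k) :=
      Finset.single_le_sum (f := fun k => |t k| - t k)
        (fun k _ => by simp [sub_nonneg, le_abs_self]) (mem_univ p)
    rw [Finset.sum_sub_distrib] at h1
    rw [abs_of_neg hp] at h1
    linarith
  · rw [abs_of_neg h]
    have h1 : |t q| + t q ≤ ∑ k, (|t k| + t k) :=
      Finset.single_le_sum (f := fun k => |t k| + t k)
        (fun k _ => by show (0:ℝ) ≤ |t k| + t k; linarith [neg_abs_le (t k)]) (mem_univ q)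
    rw [Finset.sum_add_distrib] at h1
    rw [abs_of_pos hq] at h1
    linarith

lemma tail_sum_nonneg {N : ℕ} (v : Fin (N + 1) → ℝ) (hmono : Monotone v)
    (hsum : ∑ i, v i = 0) (k : Fin N) :
    0 ≤ ∑ i ∈ Finset.univ.filter (fun i : Fin (N + 1) => (k : ℕ) < (i : ℕ)), v i := by
  rcases le_or_gt 0 (v k.succ) with h | h
  · apply Finset.sum_nonneg
    intro i hi
    simp only [mem_filter, mem_univ, true_and] at hi
    refine le_trans h (hmono ?_)
    rw [Fin.le_def]
    show (k : ℕ) + 1 ≤ (i : ℕ)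
    omega
  · have h2 : ∑ i ∈ Finset.univ.filter (fun i : Fin (N + 1) => ¬ (k : ℕ) < (i : ℕ)), v i ≤ 0 := by
      apply Finset.sum_nonpos
      intro i hi
      simp only [mem_filter, mem_univ, true_and, not_lt] at hi
      refine le_trans (hmono (b := k.succ) ?_) h.le
      rw [Fin.le_def]
      show (i : ℕ) ≤ (k : ℕ) + 1
      omega
    have h3 := Finset.sum_filter_add_sum_filter_not Finset.univ
      (fun i : Fin (N + 1) => (k : ℕ) < (i : ℕ)) v
    linarith [h3.symm ▸ hsum]

lemma rayleigh_bound {N : ℕ} (L : Matrix (Fin N) (Fin N) ℝ) (hL : L.IsHermitian) (lam : ℝ)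
    (hmax : ∀ μ : ℝ, (∃ x : Fin N → ℝ, x ≠ 0 ∧ L.mulVec x = μ • x) → μ ≤ lam)
    (v : Fin N → ℝ) : v ⬝ᵥ L.mulVec v ≤ lam * (v ⬝ᵥ v) := by
  classical
  have heig : ∀ j, hL.eigenvalues j ≤ lam := by
    intro j
    apply hmax
    refine ⟨(WithLp.equiv 2 (Fin N → ℝ)) (hL.eigenvectorBasis j), ?_, ?_⟩
    · intro h0
      have : hL.eigenvectorBasis j = 0 := by
        apply (WithLp.equiv 2 (Fin N → ℝ)).injective
        simpa using h0
      exact hL.eigenvectorBasis.toBasis.ne_zero j (by simpa using this)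
    · exact hL.mulVec_eigenvectorBasis j
  set U : Matrix (Fin N) (Fin N) ℝ := (hL.eigenvectorUnitary : Matrix (Fin N) (Fin N) ℝ) with hU
  have hdiag : (diagonal (RCLike.ofReal ∘ hL.eigenvalues) : Matrix (Fin N) (Fin N) ℝ)
      = diagonal hL.eigenvalues := by
    have h : (RCLike.ofReal ∘ hL.eigenvalues : Fin N → ℝ) = hL.eigenvalues := by
      funext j; simp [RCLike.ofReal_real_eq_id]
    rw [h]
  have hspec : L = U * diagonal hL.eigenvalues * star U := by
    rw [← hdiag]; exact hL.spectral_theorem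
  have hstarU : star U = Uᵀ := by
    rw [Matrix.star_eq_conjTranspose, Matrix.conjTranspose_eq_transpose_of_trivial]
  set w : Fin N → ℝ := Uᵀ.mulVec v with hw
  have h1 : v ⬝ᵥ L.mulVec v = w ⬝ᵥ (diagonal hL.eigenvalues).mulVec w := by
    conv_lhs => rw [hspec]
    rw [← mulVec_mulVec, ← mulVec_mulVec, dotProduct_mulVec]
    have hvU : v ᵥ* U = w := (Matrix.mulVec_transpose U v).symm
    have hsUv : star U *ᵥ v = w := by rw [hstarU, ← hw]
    rw [hvU, hsUv]
  have h2 : w ⬝ᵥ w = v ⬝ᵥ v := by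
    have hUU : U * star U = 1 := (Matrix.mem_unitaryGroup_iff).mp hL.eigenvectorUnitary.2
    calc w ⬝ᵥ w = w ⬝ᵥ Uᵀ.mulVec v := rfl
    _ = (w ᵥ* Uᵀ) ⬝ᵥ v := dotProduct_mulVec _ _ _
    _ = (U.mulVec w) ⬝ᵥ v := by rw [Matrix.vecMul_transpose]
    _ = ((U * Uᵀ).mulVec v) ⬝ᵥ v := by rw [hw, mulVec_mulVec]
    _ = v ⬝ᵥ v := by rw [← hstarU, hUU, Matrix.one_mulVec]
  rw [h1]
  have h3 : w ⬝ᵥ (diagonal hL.eigenvalues).mulVec w = ∑ j, hL.eigenvalues j * (w j * w j) := by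
    show ∑ j, w j * _ = _
    apply Finset.sum_congr rfl
    intro j _
    rw [Matrix.mulVec_diagonal]
    ring
  rw [h3]
  have h4 : ∑ j, hL.eigenvalues j * (w j * w j) ≤ ∑ j, lam * (w j * w j) := by
    apply Finset.sum_le_sum
    intro j _
    exact mul_le_mul_of_nonneg_right (heig j) (mul_self_nonneg _)
  calc ∑ j, hL.eigenvalues j * (w j * w j) ≤ ∑ j, lam * (w j * w j) := h4
  _ = lam * ∑ j, w j * w j := by rw [Finset.mul_sum]
  _ = lam * (w ⬝ᵥ w) := rfl
  _ = lam * (v ⬝ᵥ v) := by rw [h2]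

section
variable {n : ℕ} {D : Matrix (Fin (n + 1)) (Fin (n + 1)) ℝ}
  (hD : ∀ i j : Fin (n + 1), D i j = |(i : ℝ) - (j : ℝ)|)
include hD

lemma lapD_off (a b : Fin (n + 1)) (hab : a ≠ b) :
    lap D a b = -|((a : ℕ) : ℝ) - ((b : ℕ) : ℝ)| := by
  show (if a = b then _ else -D a b) = _
  rw [if_neg hab, hD]

lemma lapD_diag_nonneg (a : Fin (n + 1)) : 0 ≤ lap D a a := by
  show (0:ℝ) ≤ if a = a then _ else -D a a
  rw [if_pos rfl]
  apply Finset.sum_nonneg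
  intro k _
  rw [hD]
  exact abs_nonneg _

lemma lapD_symm : (lap D).IsHermitian := by
  rw [Matrix.IsHermitian, Matrix.conjTranspose_eq_transpose_of_trivial]
  ext a b
  show lap D b a = lap D a b
  by_cases h : a = b
  · subst h; rfl
  · rw [lapD_off hD b a (Ne.symm h), lapD_off hD a b h, abs_sub_comm]
end


lemma SL_apply {n : ℕ} (L : Matrix (Fin (n + 1)) (Fin (n + 1)) ℝ) (i : Fin n) (b : Fin (n + 1)) :
    (Smat n * L) i b = L i.succ b - L i.castSucc b := by
  rw [Matrix.mul_apply]
  exact smat_mulVec (fun a => L a b) i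

lemma M_entry {n : ℕ} (L : Matrix (Fin (n + 1)) (Fin (n + 1)) ℝ) (i j : Fin n) :
    (Smat n * L * Tmat n) i j
      = ∑ b ∈ Finset.univ.filter (fun b : Fin (n + 1) => (j : ℕ) < (b : ℕ)),
          (L i.succ b - L i.castSucc b) := by
  rw [Matrix.mul_apply, Finset.sum_filter]
  apply Finset.sum_congr rfl
  intro b _
  rw [SL_apply]
  show (L i.succ b - L i.castSucc b) * (if (j : ℕ) < (b : ℕ) then (1:ℝ) else 0) = _
  by_cases h : (j : ℕ) < (b : ℕ) <;> simp [h]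

section Mpos
variable {n : ℕ} {D : Matrix (Fin (n + 1)) (Fin (n + 1)) ℝ}
  (hD : ∀ i j : Fin (n + 1), D i j = |(i : ℝ) - (j : ℝ)|)
include hD

lemma M_pos (i j : Fin n) : 0 < (Smat n * lap D * Tmat n) i j := by
  have hMe := M_entry (lap D) i j
  have htot : ∑ b, (lap D i.succ b - lap D i.castSucc b) = 0 := by
    rw [Finset.sum_sub_distrib, lap_row_sum, lap_row_sum, sub_zero]
  rcases le_or_gt (i : ℕ) (j : ℕ) with h | h
  · -- tail form : all terms positive
    rw [hMe]
    apply Finset.sum_pos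
    · intro b hb
      simp only [mem_filter, mem_univ, true_and] at hb
      by_cases hbe : (b : ℕ) = (i : ℕ) + 1
      · have hbeq : b = i.succ := Fin.ext (by simpa using hbe)
        subst hbeq
        have hne : i.castSucc ≠ i.succ := by simp [Fin.ext_iff]
        rw [lapD_off hD i.castSucc i.succ hne]
        have hc1 : ((i.castSucc : Fin (n+1)) : ℕ) = (i : ℕ) := rfl
        have hc2 : ((i.succ : Fin (n+1)) : ℕ) = (i : ℕ) + 1 := rfl
        rw [hc1, hc2]
        have hval : (((i : ℕ) : ℝ)) - (((i : ℕ) + 1 : ℕ) : ℝ) = -1 := by push_cast; ring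
        rw [hval]
        have hdiag := lapD_diag_nonneg hD i.succ
        rw [abs_neg, abs_one]
        linarith
      · have hb2 : (i : ℕ) + 2 ≤ (b : ℕ) := by omega
        have hne1 : i.succ ≠ b := by
          intro hc; apply hbe; rw [← hc]; rfl
        have hne2 : i.castSucc ≠ b := by
          intro hc
          have : ((i.castSucc : Fin (n+1)) : ℕ) = (b : ℕ) := by rw [hc]
          simp at this; omega
        rw [lapD_off hD i.succ b hne1, lapD_off hD i.castSucc b hne2]
        have hc1 : ((i.castSucc : Fin (n+1)) : ℕ) = (i : ℕ) := rfl
        have hc2 : ((i.succ : Fin (n+1)) : ℕ) = (i : ℕ) + 1 := rfl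
        rw [hc1, hc2]
        have hcast : ((i : ℕ) : ℝ) + 2 ≤ ((b : ℕ) : ℝ) := by exact_mod_cast hb2
        have e1 : (((i : ℕ) + 1 : ℕ) : ℝ) = ((i : ℕ) : ℝ) + 1 := by push_cast; ring
        rw [e1]
        rw [abs_of_nonpos (by linarith), abs_of_nonpos (by linarith)]
        linarith
    · refine ⟨Fin.last n, ?_⟩
      simp only [mem_filter, mem_univ, true_and, Fin.val_last]
      exact j.isLt
  · -- head form
    have hsplit := Finset.sum_filter_add_sum_filter_not Finset.univ
      (fun b : Fin (n + 1) => (j : ℕ) < (b : ℕ)) (fun b => lap D i.succ b - lap D i.castSucc b)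
    rw [hMe]
    have heq : ∑ b ∈ Finset.univ.filter (fun b : Fin (n + 1) => (j : ℕ) < (b : ℕ)),
        (lap D i.succ b - lap D i.castSucc b)
        = ∑ b ∈ Finset.univ.filter (fun b : Fin (n + 1) => ¬ (j : ℕ) < (b : ℕ)),
            (lap D i.castSucc b - lap D i.succ b) := by
      have hneg : ∑ b ∈ Finset.univ.filter (fun b : Fin (n + 1) => ¬ (j : ℕ) < (b : ℕ)),
          (lap D i.castSucc b - lap D i.succ b)
          = - ∑ b ∈ Finset.univ.filter (fun b : Fin (n + 1) => ¬ (j : ℕ) < (b : ℕ)),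
              (lap D i.succ b - lap D i.castSucc b) := by
        rw [← Finset.sum_neg_distrib]
        apply Finset.sum_congr rfl; intro b _; ring
      rw [hneg]
      linarith [htot ▸ hsplit]
    rw [heq]
    apply Finset.sum_pos
    · intro b hb
      simp only [mem_filter, mem_univ, true_and, not_lt] at hb
      have hbi : (b : ℕ) < (i : ℕ) := by omega
      have hne1 : i.succ ≠ b := by
        intro hc
        have : ((i.succ : Fin (n+1)) : ℕ) = (b : ℕ) := by rw [hc]
        simp at this; omega
      have hne2 : i.castSucc ≠ b := by
        intro hc
        have : ((i.castSucc : Fin (n+1)) : ℕ) = (b : ℕ) := by rw [hc]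
        simp at this; omega
      rw [lapD_off hD i.succ b hne1, lapD_off hD i.castSucc b hne2]
      have hc1 : ((i.castSucc : Fin (n+1)) : ℕ) = (i : ℕ) := rfl
      have hc2 : ((i.succ : Fin (n+1)) : ℕ) = (i : ℕ) + 1 := rfl
      rw [hc1, hc2]
      have hcast : ((b : ℕ) : ℝ) + 1 ≤ ((i : ℕ) : ℝ) := by exact_mod_cast hbi
      have e1 : (((i : ℕ) + 1 : ℕ) : ℝ) = ((i : ℕ) : ℝ) + 1 := by push_cast; ring
      rw [e1]
      rw [abs_of_nonneg (by linarith), abs_of_nonneg (by linarith)]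
      linarith
    · refine ⟨0, ?_⟩
      simp
end Mpos

theorem path_distLap_eigvec_monotone (n : ℕ) (hn : 1 ≤ n)
    (D : Matrix (Fin (n + 1)) (Fin (n + 1)) ℝ)
    (hD : ∀ i j : Fin (n + 1), D i j = |(i : ℝ) - (j : ℝ)|)
    (lam : ℝ)
    (hev : ∃ x : Fin (n + 1) → ℝ, x ≠ 0 ∧ (lap D).mulVec x = lam • x)
    (hmax : ∀ μ : ℝ, (∃ x : Fin (n + 1) → ℝ, x ≠ 0 ∧ (lap D).mulVec x = μ • x) → μ ≤ lam) :
    ∀ x : Fin (n + 1) → ℝ, x ≠ 0 → (lap D).mulVec x = lam • x →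
      Antitone x ∨ Monotone x := by
  intro x hx hLx
  classical
  set y : Fin n → ℝ := (Smat n).mulVec x with hy
  by_cases hposs : ∀ i, 0 ≤ y i
  · right
    rw [Fin.monotone_iff_le_succ]
    intro i
    have h := hposs i
    rw [hy, smat_mulVec] at h
    linarith
  by_cases hnegs : ∀ i, y i ≤ 0
  · left
    rw [Fin.antitone_iff_succ_le]
    intro i
    have h := hnegs i
    rw [hy, smat_mulVec] at h
    linarith
  exfalso
  push_neg at hposs hnegs
  obtain ⟨p, hp⟩ := hposs
  obtain ⟨q, hq⟩ := hnegs
  have hLsym : (lap D).IsHermitian := lapD_symm hD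
  have RB := rayleigh_bound (lap D) hLsym lam hmax
  -- λ > 0
  have hlam : 0 < lam := by
    set a : Fin (n + 1) := ⟨0, by omega⟩ with ha
    set b : Fin (n + 1) := ⟨1, by omega⟩ with hb
    have hab : a ≠ b := by simp [ha, hb, Fin.ext_iff]
    set v : Fin (n + 1) → ℝ := Pi.single a 1 - Pi.single b 1 with hv
    have hLv : (lap D).mulVec v = fun i => lap D i a - lap D i b := by
      rw [hv, mulVec_sub, mulVec_single, mulVec_single]
      funext i; simp
    have hva : v a = 1 := by
      rw [hv]; simp [Pi.single_apply, hab, Ne.symm hab]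
    have hvb : v b = -1 := by
      rw [hv]; simp [Pi.single_apply, hab, Ne.symm hab]
    have hvv : v ⬝ᵥ v = 2 := by
      rw [hv, sub_dotProduct, single_dotProduct, single_dotProduct,
        ← hv, hva, hvb]
      ring
    have hvLv : v ⬝ᵥ (lap D).mulVec v = lap D a a + lap D b b - lap D a b - lap D b a := by
      rw [hLv, hv, sub_dotProduct, single_dotProduct, single_dotProduct]
      ring
    have hLab : lap D a b = -1 := by
      rw [lapD_off hD a b hab]
      norm_num [ha, hb]
    have hLba : lap D b a = -1 := by
      rw [lapD_off hD b a (Ne.symm hab)]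
      norm_num [ha, hb]
    have hda := lapD_diag_nonneg hD a
    have hdb := lapD_diag_nonneg hD b
    have h2 := RB v
    rw [hvv, hvLv, hLab, hLba] at h2
    linarith
  -- the matrix M
  set Mm : Matrix (Fin n) (Fin n) ℝ := Smat n * lap D * Tmat n with hM
  have hMpos : ∀ i j, 0 < Mm i j := fun i j => M_pos hD i j
  have hMy : Mm.mulVec y = lam • y := by
    have h1 : Mm.mulVec y = (Smat n).mulVec ((lap D).mulVec ((Tmat n).mulVec y)) := by
      rw [hM, ← mulVec_mulVec, ← mulVec_mulVec]
    have h2 : (Tmat n).mulVec y = x - (fun _ => x 0) := by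
      funext a
      rw [hy]
      show (Tmat n).mulVec ((Smat n).mulVec x) a = _
      rw [tmat_smat_mulVec]
      simp
    rw [h1, h2, mulVec_sub, lap_mulVec_const, sub_zero, hLx, mulVec_smul, ← hy]
  set z : Fin n → ℝ := fun k => |y k| with hz
  have hzpos : ∀ k, 0 ≤ z k := fun k => abs_nonneg _
  have hMz : ∀ k, lam * z k < Mm.mulVec z k := by
    intro k
    have h2 : lam * z k = |lam * y k| := by
      rw [abs_mul, abs_of_pos hlam, hz]
    have h3 : lam * y k = ∑ b, Mm k b * y b := by
      have h := congrFun hMy k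
      have : (Mm.mulVec y) k = ∑ b, Mm k b * y b := rfl
      rw [this] at h
      simpa using h.symm
    rw [h2, h3]
    calc |∑ b, Mm k b * y b| < ∑ b, |Mm k b * y b| :=
          abs_sum_lt _ p q (mul_neg_of_pos_of_neg (hMpos k p) hp) (mul_pos (hMpos k q) hq)
    _ = ∑ b, Mm k b * z b := by
          apply Finset.sum_congr rfl
          intro b _
          rw [abs_mul, abs_of_pos (hMpos k b), hz]
    _ = Mm.mulVec z k := rfl
  set w : Fin (n + 1) → ℝ := (Tmat n).mulVec z with hw
  set m : ℝ := (∑ i, w i) / ((n : ℝ) + 1) with hm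
  set x' : Fin (n + 1) → ℝ := fun i => w i - m with hx'
  have hx'sum : ∑ i, x' i = 0 := by
    rw [hx']
    rw [Finset.sum_sub_distrib, Finset.sum_const, Finset.card_univ, Fintype.card_fin,
      nsmul_eq_mul, hm]
    have hne : ((n : ℝ) + 1) ≠ 0 := by positivity
    push_cast
    field_simp
    ring
  have hsucc : ∀ i : Fin n, w i.succ - w i.castSucc = z i := by
    intro i
    rw [hw]
    exact tmat_succ_sub z i
  have hx'mono : Monotone x' := by
    rw [Fin.monotone_iff_le_succ]
    intro i
    show w i.castSucc - m ≤ w i.succ - m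
    have h := hsucc i
    have := hzpos i
    linarith
  have hSx' : (Smat n).mulVec x' = z := by
    funext i
    rw [smat_mulVec]
    show (w i.succ - m) - (w i.castSucc - m) = z i
    have h := hsucc i
    linarith
  set g : Fin n → ℝ := fun k =>
    ∑ i ∈ Finset.univ.filter (fun i : Fin (n + 1) => (k : ℕ) < (i : ℕ)), x' i with hg
  have hgnn : ∀ k, 0 ≤ g k := fun k => tail_sum_nonneg x' hx'mono hx'sum k
  have hTdot : ∀ v : Fin n → ℝ, x' ⬝ᵥ (Tmat n).mulVec v = ∑ k, g k * v k := by
    intro v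
    rw [dotProduct_mulVec]
    have hvm : x' ᵥ* (Tmat n) = g := by
      funext k
      show ∑ i, x' i * Tmat n i k = g k
      rw [hg]
      show _ = ∑ i ∈ Finset.univ.filter (fun i : Fin (n + 1) => (k : ℕ) < (i : ℕ)), x' i
      rw [Finset.sum_filter]
      apply Finset.sum_congr rfl
      intro i _
      show x' i * (if (k : ℕ) < (i : ℕ) then (1:ℝ) else 0) = _
      by_cases h : (k : ℕ) < (i : ℕ) <;> simp [h]
    rw [hvm]
    rfl
  have hux : (lap D).mulVec x' = (lap D).mulVec w := by
    have hxw : x' = w - (fun _ => m) := by funext i; rw [hx']; simp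
    rw [hxw, mulVec_sub, lap_mulVec_const, sub_zero]
  have hMzS : Mm.mulVec z = (Smat n).mulVec ((lap D).mulVec w) := by
    rw [hM, ← mulVec_mulVec, ← mulVec_mulVec, ← hw]
  have hLwT : (lap D).mulVec w = fun a =>
      (Tmat n).mulVec (Mm.mulVec z) a + ((lap D).mulVec w) 0 := by
    funext a
    rw [hMzS, tmat_smat_mulVec]
    ring
  have key1 : x' ⬝ᵥ (lap D).mulVec x' = ∑ k, g k * Mm.mulVec z k := by
    rw [hux]
    conv_lhs => rw [hLwT]
    have expand : x' ⬝ᵥ (fun a => (Tmat n).mulVec (Mm.mulVec z) a + ((lap D).mulVec w) 0)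
        = x' ⬝ᵥ (Tmat n).mulVec (Mm.mulVec z) + (∑ a, x' a) * ((lap D).mulVec w) 0 := by
      show ∑ a, x' a * (_ + _) = _
      simp only [mul_add]
      rw [Finset.sum_add_distrib, Finset.sum_mul]
      rfl
    rw [expand, hx'sum, zero_mul, add_zero, hTdot]
  have key2 : x' ⬝ᵥ x' = ∑ k, g k * z k := by
    have h1 : x' ⬝ᵥ x' = x' ⬝ᵥ w := by
      show ∑ i, x' i * x' i = ∑ i, x' i * w i
      have h2 : ∀ i : Fin (n + 1), x' i * x' i = x' i * w i - x' i * m := by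
        intro i
        have : x' i = w i - m := by rw [hx']
        rw [this]; ring
      rw [Finset.sum_congr rfl (fun i _ => h2 i), Finset.sum_sub_distrib, ← Finset.sum_mul,
        hx'sum, zero_mul, sub_zero]
    rw [h1, hw, hTdot]
  have hgnz : ∃ k, 0 < g k := by
    by_contra hcon
    push_neg at hcon
    have hg0 : ∀ k, g k = 0 := fun k => le_antisymm (hcon k) (hgnn k)
    have hxx : ∑ i, x' i * x' i = 0 := by
      have : x' ⬝ᵥ x' = 0 := by rw [key2]; simp [hg0]
      exact this
    have hx'0 : x' = 0 := by
      funext i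
      have h1 : ∀ j ∈ Finset.univ, (0:ℝ) ≤ x' j * x' j := fun j _ => mul_self_nonneg _
      have h2 := (Finset.sum_eq_zero_iff_of_nonneg h1).1 hxx i (mem_univ i)
      exact mul_self_eq_zero.1 h2
    have hzq : z q = 0 := by
      rw [← hSx', hx'0]
      simp [mulVec]
    rw [hz] at hzq
    have : y q = 0 := abs_eq_zero.1 hzq
    linarith
  obtain ⟨k0, hk0⟩ := hgnz
  have hRB := RB x'
  rw [key1, key2] at hRB
  have hstrict : ∑ k, g k * (lam * z k) < ∑ k, g k * Mm.mulVec z k := by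
    apply Finset.sum_lt_sum
    · intro k _
      exact mul_le_mul_of_nonneg_left (le_of_lt (hMz k)) (hgnn k)
    · exact ⟨k0, mem_univ k0, mul_lt_mul_of_pos_left (hMz k0) hk0⟩
  have heq : ∑ k, g k * (lam * z k) = lam * ∑ k, g k * z k := by
    rw [Finset.mul_sum]
    apply Finset.sum_congr rfl
    intro k _
    ring
  rw [heq] at hstrict
  linarith
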